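/- Let A ∈ C^{n×n} and suppose there exist real numbers γ₁, …, γ_m and matrices A₁, …, A_m ∈ C^{n×n} with A = A_m A_{m−1} ⋯ A₁ such that Σ_{k=1}^m ( θ(e^{−iγ_k} A_k) ) + | Σ_{k=1}^m γ_k | < π, where θ denotes the singular angle. Then every eigenvalue λ of A satisfies λ ≠ −t for all t > 0 (i.e., no eigenvalue lies on the negative real axis), and in particular I + A is invertible. -/

import Mathlib

open scoped Matrix
open InnerProductGeometry Real
open scoped RealInnerProductSpace

noncomputable def evnorm {n : ℕ} (x : Fin n → ℂ) : ℝ :=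
  Real.sqrt ((star x ⬝ᵥ x).re)

noncomputable def qform {n : ℕ} (A : Matrix (Fin n) (Fin n) ℂ) (x : Fin n → ℂ) : ℂ :=
  star x ⬝ᵥ A.mulVec x

noncomputable def nnr {n : ℕ} (A : Matrix (Fin n) (Fin n) ℂ) : Set ℂ :=
  {z | ∃ x : Fin n → ℂ, x ≠ 0 ∧ A.mulVec x ≠ 0 ∧
    z = qform A x / ((evnorm x * evnorm (A.mulVec x) : ℝ) : ℂ)}

noncomputable def singAngle {n : ℕ} (A : Matrix (Fin n) (Fin n) ℂ) : ℝ :=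
  sSup {θ : ℝ | ∃ x : Fin n → ℂ, x ≠ 0 ∧ A.mulVec x ≠ 0 ∧
    θ = Real.arccos ((qform A x).re / (evnorm x * evnorm (A.mulVec x)))}

noncomputable def revProd {n m : ℕ} (A : Fin m → Matrix (Fin n) (Fin n) ℂ) :
    Matrix (Fin n) (Fin n) ℂ :=
  (List.ofFn A).reverse.prod

lemma arccos_le_arccos' {x y : ℝ} (h : x ≤ y) : Real.arccos y ≤ Real.arccos x := by
  unfold Real.arccos
  have := Real.monotone_arcsin h
  linarith

section Tri
variable {V : Type*} [NormedAddCommGroup V] [InnerProductSpace ℝ V]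

lemma tri_unit {u v w : V} (hu : ‖u‖ = 1) (hv : ‖v‖ = 1) (hw : ‖w‖ = 1) :
    angle u w ≤ angle u v + angle v w := by
  set a := angle u v with ha
  set b := angle v w with hb
  by_cases hab : π ≤ a + b
  · exact le_trans (angle_le_pi u w) hab
  push_neg at hab
  have ha0 : 0 ≤ a := angle_nonneg u v
  have hb0 : 0 ≤ b := angle_nonneg v w
  have hcosa : Real.cos a = ⟪u, v⟫ := by
    rw [ha, cos_angle, hu, hv]; norm_num
  have hcosb : Real.cos b = ⟪v, w⟫ := by
    rw [hb, cos_angle, hv, hw]; norm_num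
  have hsina : Real.sin a = Real.sqrt (1 - ⟪u, v⟫ ^ 2) := by
    rw [Real.sin_eq_sqrt_one_sub_cos_sq ha0 (angle_le_pi u v), hcosa]
  have hsinb : Real.sin b = Real.sqrt (1 - ⟪v, w⟫ ^ 2) := by
    rw [Real.sin_eq_sqrt_one_sub_cos_sq hb0 (angle_le_pi v w), hcosb]
  set p := u - ⟪u, v⟫ • v with hp
  set q := w - ⟪v, w⟫ • v with hq
  have hvv : ⟪v, v⟫ = 1 := by rw [real_inner_self_eq_norm_mul_norm, hv]; norm_num
  have hpq : ⟪p, q⟫ = ⟪u, w⟫ - ⟪u, v⟫ * ⟪v, w⟫ := by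
    simp [hp, hq, inner_sub_left, inner_sub_right, inner_smul_left, inner_smul_right,
      hvv, hv, real_inner_comm v u, real_inner_comm w v]

  have hnp : ‖p‖ ^ 2 = 1 - ⟪u, v⟫ ^ 2 := by
    rw [← real_inner_self_eq_norm_sq]
    simp only [hp, inner_sub_left, inner_sub_right, real_inner_smul_left, real_inner_smul_right, hvv,
      real_inner_comm v u]
    have : ⟪u, u⟫ = 1 := by rw [real_inner_self_eq_norm_mul_norm, hu]; norm_num
    rw [this]; ring
  have hnq : ‖q‖ ^ 2 = 1 - ⟪v, w⟫ ^ 2 := by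
    rw [← real_inner_self_eq_norm_sq]
    simp only [hq, inner_sub_left, inner_sub_right, real_inner_smul_left, real_inner_smul_right, hvv,
      real_inner_comm w v]
    have : ⟪w, w⟫ = 1 := by rw [real_inner_self_eq_norm_mul_norm, hw]; norm_num
    rw [this]; ring
  have hnp' : ‖p‖ = Real.sqrt (1 - ⟪u, v⟫ ^ 2) := by
    rw [← hnp, Real.sqrt_sq (norm_nonneg _)]
  have hnq' : ‖q‖ = Real.sqrt (1 - ⟪v, w⟫ ^ 2) := by
    rw [← hnq, Real.sqrt_sq (norm_nonneg _)]
  have hcs : -(‖p‖ * ‖q‖) ≤ ⟪p, q⟫ := neg_abs_le _ |>.trans' (by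
    have := abs_real_inner_le_norm p q
    linarith [abs_nonneg ⟪p, q⟫, neg_abs_le ⟪p, q⟫])
  have key : Real.cos (a + b) ≤ ⟪u, w⟫ := by
    rw [Real.cos_add, hcosa, hcosb, hsina, hsinb]
    have := abs_real_inner_le_norm p q
    rw [hnp', hnq'] at hcs
    nlinarith [hpq]
  have huw : angle u w = Real.arccos ⟪u, w⟫ := by
    rw [angle, hu, hw]; norm_num
  rw [huw]
  calc Real.arccos ⟪u, w⟫ ≤ Real.arccos (Real.cos (a + b)) := arccos_le_arccos' key
    _ = a + b := Real.arccos_cos (by linarith) (le_of_lt hab)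

lemma angle_triangle' (u v w : V) (hu : u ≠ 0) (hv : v ≠ 0) (hw : w ≠ 0) :
    angle u w ≤ angle u v + angle v w := by
  have hu' : (0:ℝ) < ‖u‖⁻¹ := inv_pos.mpr (norm_pos_iff.mpr (by assumption))
  have hv' : (0:ℝ) < ‖v‖⁻¹ := inv_pos.mpr (norm_pos_iff.mpr (by assumption))
  have hw' : (0:ℝ) < ‖w‖⁻¹ := inv_pos.mpr (norm_pos_iff.mpr (by assumption))
  have h1 : angle u w = angle (‖u‖⁻¹ • u) (‖w‖⁻¹ • w) := by
    rw [angle_smul_left_of_pos _ _ hu', angle_smul_right_of_pos _ _ hw']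
  have h2 : angle u v = angle (‖u‖⁻¹ • u) (‖v‖⁻¹ • v) := by
    rw [angle_smul_left_of_pos _ _ hu', angle_smul_right_of_pos _ _ hv']
  have h3 : angle v w = angle (‖v‖⁻¹ • v) (‖w‖⁻¹ • w) := by
    rw [angle_smul_left_of_pos _ _ hv', angle_smul_right_of_pos _ _ hw']
  rw [h1, h2, h3]
  exact tri_unit (norm_smul_inv_norm hu) (norm_smul_inv_norm hv) (norm_smul_inv_norm hw)

end Tri

noncomputable def toE {n : ℕ} (x : Fin n → ℂ) : EuclideanSpace ℂ (Fin n) :=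
  (WithLp.equiv 2 (Fin n → ℂ)).symm x

noncomputable def phi {n : ℕ} (x y : Fin n → ℂ) : ℝ := angle (toE x) (toE y)

lemma inner_toE {n : ℕ} (x y : Fin n → ℂ) : ⟪toE x, toE y⟫ = (star x ⬝ᵥ y).re := by
  simp [toE, PiLp.inner_apply, dotProduct, Complex.re_sum, Complex.inner,
    Complex.star_def]
  exact Finset.sum_congr rfl fun i _ => by ring

lemma norm_toE {n : ℕ} (x : Fin n → ℂ) : ‖toE x‖ = evnorm x := by
  rw [evnorm, ← inner_toE x x, real_inner_self_eq_norm_mul_norm,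
    Real.sqrt_mul_self (norm_nonneg _)]

lemma toE_ne_zero {n : ℕ} {x : Fin n → ℂ} (hx : x ≠ 0) : toE x ≠ 0 := by
  simpa [toE] using hx

lemma phi_eq {n : ℕ} (x y : Fin n → ℂ) :
    phi x y = Real.arccos ((star x ⬝ᵥ y).re / (evnorm x * evnorm y)) := by
  rw [phi, angle, inner_toE, norm_toE, norm_toE]

lemma star_dot_smul {n : ℕ} (c d : ℂ) (x y : Fin n → ℂ) :
    star (c • x) ⬝ᵥ (d • y) = (starRingEnd ℂ) c * d * (star x ⬝ᵥ y) := by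
  simp [star_smul, smul_dotProduct, dotProduct_smul, smul_eq_mul]
  ring

lemma re_dot_nonneg {n : ℕ} (x : Fin n → ℂ) : 0 ≤ (star x ⬝ᵥ x).re := by
  simp [dotProduct, Complex.re_sum, Complex.star_def]
  exact Finset.sum_nonneg fun i _ => by
    simpa [Complex.mul_conj', Complex.normSq_apply] using Complex.normSq_nonneg (x i)

lemma re_dot_pos {n : ℕ} {x : Fin n → ℂ} (hx : x ≠ 0) : 0 < (star x ⬝ᵥ x).re := by
  obtain ⟨i, hi⟩ := Function.ne_iff.mp hx
  have h1 : star x ⬝ᵥ x = ∑ j, (Complex.normSq (x j) : ℂ) := by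
    simp [dotProduct, Complex.star_def, Complex.normSq_eq_conj_mul_self]
  rw [h1]
  simp only [Complex.re_sum, Complex.ofReal_re]
  exact Finset.sum_pos' (fun j _ => Complex.normSq_nonneg _)
    ⟨i, Finset.mem_univ i, Complex.normSq_pos.mpr hi⟩

lemma dot_self_im {n : ℕ} (x : Fin n → ℂ) : (star x ⬝ᵥ x).im = 0 := by
  have h1 : star x ⬝ᵥ x = ∑ j, (Complex.normSq (x j) : ℂ) := by
    simp [dotProduct, Complex.star_def, Complex.normSq_eq_conj_mul_self]
  rw [h1]; simp [Complex.im_sum]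

lemma evnorm_smul {n : ℕ} (c : ℂ) (x : Fin n → ℂ) :
    evnorm (c • x) = ‖c‖ * evnorm x := by
  rw [evnorm, evnorm, star_dot_smul]
  have : (starRingEnd ℂ) c * c * (star x ⬝ᵥ x) = (Complex.normSq c : ℂ) * (star x ⬝ᵥ x) := by
    rw [Complex.normSq_eq_conj_mul_self]
  rw [this, Complex.re_ofReal_mul, Real.sqrt_mul (Complex.normSq_nonneg c), ← Complex.norm_def]

lemma evnorm_pos {n : ℕ} {x : Fin n → ℂ} (hx : x ≠ 0) : 0 < evnorm x :=
  Real.sqrt_pos.mpr (re_dot_pos hx)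

lemma phi_smul_smul {n : ℕ} {c : ℂ} (hc : c ≠ 0) (x y : Fin n → ℂ) (hx : x ≠ 0) (hy : y ≠ 0) :
    phi (c • x) (c • y) = phi x y := by
  rw [phi_eq, phi_eq, star_dot_smul, evnorm_smul, evnorm_smul]
  have h1 : (starRingEnd ℂ) c * c * (star x ⬝ᵥ y) = (Complex.normSq c : ℂ) * (star x ⬝ᵥ y) := by
    rw [Complex.normSq_eq_conj_mul_self]
  rw [h1, Complex.re_ofReal_mul]
  congr 1
  have habs : ‖c‖ * evnorm x * (‖c‖ * evnorm y)
      = Complex.normSq c * (evnorm x * evnorm y) := by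
    rw [← Complex.sq_norm]; ring
  rw [habs, mul_div_mul_left _ _ (Complex.normSq_pos.mpr hc).ne']

lemma phi_smul_self {n : ℕ} {c : ℂ} (hc : c ≠ 0) {x : Fin n → ℂ} (hx : x ≠ 0) :
    phi x (c • x) = Real.arccos (c.re / ‖c‖) := by
  rw [phi_eq, evnorm_smul]
  congr 1
  have h1 : star x ⬝ᵥ (c • x) = c * (star x ⬝ᵥ x) := by
    simp [dotProduct_smul, smul_eq_mul]
  rw [h1, Complex.mul_re, dot_self_im]
  have h2 : evnorm x * (‖c‖ * evnorm x) = ‖c‖ * (star x ⬝ᵥ x).re := by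
    rw [mul_comm (‖c‖) (evnorm x), ← mul_assoc, evnorm, Real.mul_self_sqrt (re_dot_nonneg x)]
    ring
  rw [h2]
  rw [mul_zero, sub_zero, mul_comm (c.re), mul_comm (‖c‖) ((star x ⬝ᵥ x).re),
    mul_div_mul_left _ _ (ne_of_gt (re_dot_pos hx))]

lemma singAngle_bddAbove {n : ℕ} (M : Matrix (Fin n) (Fin n) ℂ) :
    BddAbove {θ : ℝ | ∃ x : Fin n → ℂ, x ≠ 0 ∧ M.mulVec x ≠ 0 ∧
      θ = Real.arccos ((qform M x).re / (evnorm x * evnorm (M.mulVec x)))} :=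
  ⟨Real.pi, fun θ ⟨x, _, _, hθ⟩ => hθ ▸ Real.arccos_le_pi _⟩

lemma singAngle_nonneg {n : ℕ} (M : Matrix (Fin n) (Fin n) ℂ) : 0 ≤ singAngle M := by
  rcases Set.eq_empty_or_nonempty {θ : ℝ | ∃ x : Fin n → ℂ, x ≠ 0 ∧ M.mulVec x ≠ 0 ∧
      θ = Real.arccos ((qform M x).re / (evnorm x * evnorm (M.mulVec x)))} with he | ⟨θ, hθ⟩
  · rw [singAngle, he, Real.sSup_empty]
  · refine le_trans ?_ (le_csSup (singAngle_bddAbove M) hθ)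
    obtain ⟨x, _, _, hθ'⟩ := hθ
    exact hθ' ▸ Real.arccos_nonneg _

lemma phi_le_singAngle {n : ℕ} {M : Matrix (Fin n) (Fin n) ℂ} {x : Fin n → ℂ}
    (hx : x ≠ 0) (hMx : M.mulVec x ≠ 0) : phi x (M.mulVec x) ≤ singAngle M := by
  rw [phi_eq]
  exact le_csSup (singAngle_bddAbove M) ⟨x, hx, hMx, rfl⟩

lemma phi_triangle {n : ℕ} {x y z : Fin n → ℂ} (hx : x ≠ 0) (hy : y ≠ 0) (hz : z ≠ 0) :
    phi x z ≤ phi x y + phi y z :=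
  angle_triangle' _ _ _ (toE_ne_zero hx) (toE_ne_zero hy) (toE_ne_zero hz)

lemma phi_self {n : ℕ} {x : Fin n → ℂ} (hx : x ≠ 0) : phi x x = 0 :=
  angle_self (toE_ne_zero hx)

lemma revProd_zero {n : ℕ} (A : Fin 0 → Matrix (Fin n) (Fin n) ℂ) : revProd A = 1 := by
  simp [revProd]

lemma revProd_succ {n m : ℕ} (A : Fin (m + 1) → Matrix (Fin n) (Fin n) ℂ) :
    revProd A = revProd (fun k => A k.succ) * A 0 := by
  rw [revProd, List.ofFn_succ, List.reverse_cons, List.prod_append, List.prod_singleton, revProd]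

lemma main_ineq {n : ℕ} : ∀ (m : ℕ) (Ak : Fin m → Matrix (Fin n) (Fin n) ℂ) (γ : Fin m → ℝ)
    (x : Fin n → ℂ), x ≠ 0 → (revProd Ak).mulVec x ≠ 0 →
    phi x (Complex.exp (-(↑(∑ k, γ k) : ℂ) * Complex.I) • (revProd Ak).mulVec x)
      ≤ ∑ k, singAngle (Complex.exp (-(γ k : ℂ) * Complex.I) • Ak k) := by
  intro m
  induction m with
  | zero =>
    intro Ak γ x hx _
    rw [revProd_zero, Matrix.one_mulVec]
    simp only [Finset.univ_eq_empty, Finset.sum_empty]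
    rw [Complex.ofReal_zero, neg_zero, zero_mul, Complex.exp_zero, one_smul]
    exact le_of_eq (phi_self hx)
  | succ m ih =>
    intro Ak γ x hx hAx
    have hexp : ∀ z : ℂ, Complex.exp z ≠ 0 := Complex.exp_ne_zero
    set B := revProd (fun k => Ak k.succ) with hB
    set x₁ := (Ak 0).mulVec x with hx₁def
    have hsplit : (revProd Ak).mulVec x = B.mulVec x₁ := by
      rw [revProd_succ, ← Matrix.mulVec_mulVec]
    have hx₁ : x₁ ≠ 0 := by
      intro h0
      apply hAx
      rw [hsplit, h0, Matrix.mulVec_zero]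
    have hBx₁ : B.mulVec x₁ ≠ 0 := by rw [← hsplit]; exact hAx
    set c₀ : ℂ := Complex.exp (-(γ 0 : ℂ) * Complex.I) with hc₀
    set Γ' : ℝ := ∑ k : Fin m, γ k.succ with hΓ'
    have hΓsum : (∑ k, γ k) = γ 0 + Γ' := Fin.sum_univ_succ γ
    have hcsplit : Complex.exp (-(↑(∑ k, γ k) : ℂ) * Complex.I)
        = c₀ * Complex.exp (-(Γ' : ℂ) * Complex.I) := by
      rw [hΓsum, hc₀, ← Complex.exp_add]
      congr 1
      push_cast
      ring
    -- middle vector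
    have hmid : (c₀ • x₁) ≠ 0 := smul_ne_zero (hexp _) hx₁
    have hfin : Complex.exp (-(↑(∑ k, γ k) : ℂ) * Complex.I) • (revProd Ak).mulVec x ≠ 0 :=
      smul_ne_zero (hexp _) hAx
    have tri := phi_triangle (y := c₀ • x₁) hx hmid (by
      exact hfin)
    refine le_trans tri ?_
    rw [Fin.sum_univ_succ (f := fun k => singAngle (Complex.exp (-(γ k : ℂ) * Complex.I) • Ak k))]
    have hstep1 : phi x (c₀ • x₁) ≤ singAngle (Complex.exp (-(γ 0 : ℂ) * Complex.I) • Ak 0) := by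
      have h1 : c₀ • x₁ = (c₀ • Ak 0).mulVec x := by
        rw [Matrix.smul_mulVec, hx₁def]
      rw [h1]
      exact phi_le_singAngle hx (by rw [← h1]; exact hmid)
    have hstep2 : phi (c₀ • x₁) (Complex.exp (-(↑(∑ k, γ k) : ℂ) * Complex.I) • (revProd Ak).mulVec x)
        ≤ ∑ k : Fin m, singAngle (Complex.exp (-(γ k.succ : ℂ) * Complex.I) • Ak k.succ) := by
      have h2 : Complex.exp (-(↑(∑ k, γ k) : ℂ) * Complex.I) • (revProd Ak).mulVec x
          = c₀ • (Complex.exp (-(Γ' : ℂ) * Complex.I) • B.mulVec x₁) := by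
        rw [hsplit, hcsplit, mul_smul]
      rw [h2, phi_smul_smul (hexp _) _ _ hx₁ (smul_ne_zero (hexp _) hBx₁)]
      exact ih (fun k => Ak k.succ) (fun k => γ k.succ) x₁ hx₁ hBx₁
    exact add_le_add hstep1 hstep2

theorem stmt8 {n m : ℕ} (A : Matrix (Fin n) (Fin n) ℂ)
    (Ak : Fin m → Matrix (Fin n) (Fin n) ℂ) (γ : Fin m → ℝ)
    (hA : A = revProd Ak)
    (h : (∑ k, singAngle (Complex.exp (-(γ k : ℂ) * Complex.I) • Ak k)) +
        |∑ k, γ k| < Real.pi) :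
    (∀ μ ∈ spectrum ℂ A, ∀ t : ℝ, 0 < t → μ ≠ -(t : ℂ)) ∧ IsUnit (1 + A) := by
  subst hA
  set A := revProd Ak with hA
  have hsum_nonneg : 0 ≤ ∑ k, singAngle (Complex.exp (-(γ k : ℂ) * Complex.I) • Ak k) :=
    Finset.sum_nonneg fun k _ => singAngle_nonneg _
  set Γ : ℝ := ∑ k, γ k with hΓ
  have hΓlt : |Γ| < Real.pi := by linarith
  have part1 : ∀ μ ∈ spectrum ℂ A, ∀ t : ℝ, 0 < t → μ ≠ -(t : ℂ) := by
    intro μ hμ t ht heq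
    rw [spectrum.mem_iff, Matrix.isUnit_iff_isUnit_det, isUnit_iff_ne_zero, not_not] at hμ
    obtain ⟨v, hv, hv0⟩ := (Matrix.exists_mulVec_eq_zero_iff).mpr hμ
    have hAv : A.mulVec v = μ • v := by
      have : (algebraMap ℂ (Matrix (Fin n) (Fin n) ℂ) μ - A).mulVec v
          = μ • v - A.mulVec v := by
        rw [Matrix.sub_mulVec, Algebra.algebraMap_eq_smul_one, Matrix.smul_mulVec,
          Matrix.one_mulVec]
      rw [this] at hv0
      exact (sub_eq_zero.mp hv0).symm
    have hμ0 : μ ≠ 0 := by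
      rw [heq]
      exact neg_ne_zero.mpr (Complex.ofReal_ne_zero.mpr ht.ne')
    have hAv0 : A.mulVec v ≠ 0 := by rw [hAv]; exact smul_ne_zero hμ0 hv
    have hmain := main_ineq m Ak γ v hv hAv0
    rw [hAv, heq] at hmain
    set c : ℂ := Complex.exp (-(Γ : ℂ) * Complex.I) * (-(t : ℂ)) with hc
    have hsm : Complex.exp (-(Γ : ℂ) * Complex.I) • (-(t : ℂ)) • v = c • v := by
      rw [smul_smul]
    rw [hsm] at hmain
    have hc0 : c ≠ 0 := mul_ne_zero (Complex.exp_ne_zero _)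
      (neg_ne_zero.mpr (Complex.ofReal_ne_zero.mpr ht.ne'))
    rw [phi_smul_self hc0 hv] at hmain
    have hexp_eq : -(Γ : ℂ) * Complex.I = ((-Γ : ℝ) : ℂ) * Complex.I := by push_cast; ring
    have hcre : c.re = -t * Real.cos Γ := by
      rw [hc, hexp_eq]
      have : (-(t : ℂ)) = (((-t : ℝ)) : ℂ) := by push_cast; ring
      rw [this, mul_comm, Complex.re_ofReal_mul, Complex.exp_ofReal_mul_I_re, Real.cos_neg]
    have hcabs : ‖c‖ = t := by
      rw [hc, norm_mul, hexp_eq, Complex.norm_exp_ofReal_mul_I, one_mul, norm_neg,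
        Complex.norm_real, Real.norm_eq_abs, abs_of_pos ht]
    have hratio : c.re / ‖c‖ = -Real.cos Γ := by
      rw [hcre, hcabs]
      field_simp
    rw [hratio, Real.arccos_neg] at hmain
    have harc : Real.arccos (Real.cos Γ) = |Γ| := by
      rcases le_total 0 Γ with hΓ0 | hΓ0
      · rw [Real.arccos_cos hΓ0 (by rw [abs_of_nonneg hΓ0] at hΓlt; linarith),
          abs_of_nonneg hΓ0]
      · rw [← Real.cos_neg, Real.arccos_cos (by linarith)
          (by rw [abs_of_nonpos hΓ0] at hΓlt; linarith), abs_of_nonpos hΓ0]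
    rw [harc] at hmain
    linarith
  refine ⟨part1, ?_⟩
  have h1 : (-1 : ℂ) ∉ spectrum ℂ A := fun hmem =>
    (part1 _ hmem 1 one_pos) (by norm_num)
  rw [spectrum.notMem_iff] at h1
  have heq1 : algebraMap ℂ (Matrix (Fin n) (Fin n) ℂ) (-1) - A = -(1 + A) := by
    rw [map_neg, map_one, neg_add, sub_eq_add_neg]
  rw [heq1, IsUnit.neg_iff] at h1
  exact h1
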